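/- Define operators on ℚ(q)[X₀,X₁] acting on monomials X₀^aX₁^b by e(X₀^aX₁^b) = [b] X₀^{a+1}X₁^{b-1}, t(X₀^aX₁^b) = −[b] X₀^aX₁^b. Then e²t + t e² = (q + q⁻¹) e t e as operators. -/

import Mathlib

noncomputable section

/-- The field ℚ(q) of rational functions over ℚ. -/
abbrev K : Type := RatFunc ℚ

/-- The indeterminate q. -/
def q : K := RatFunc.X

/-- The quantum integer [m]. -/
def qint (m : ℤ) : K := (q ^ m - q ^ (-m)) / (q - q⁻¹)

/-- The monomial X₀^a X₁^b in ℚ(q)[X₀,X₁]. -/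
def mono (a b : ℕ) : MvPolynomial (Fin 2) K :=
  MvPolynomial.monomial (Finsupp.single 0 a + Finsupp.single 1 b) (1 : K)

lemma q_ne_zero : q ≠ 0 := RatFunc.X_ne_zero

lemma q_sub_inv_ne_zero : q - q⁻¹ ≠ 0 := by
  intro h
  have h2 : q * q = 1 := by
    have h1 : q = q⁻¹ := by linear_combination h
    nth_rewrite 2 [h1]
    field_simp [q_ne_zero]
  have h3 : (Polynomial.X : Polynomial ℚ) * Polynomial.X = 1 := by
    apply IsFractionRing.injective (Polynomial ℚ) K
    simpa [q, RatFunc.algebraMap_X, map_mul, map_one] using h2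
  have := congrArg Polynomial.natDegree h3
  simp [← pow_two] at this

lemma qint_zero : qint 0 = 0 := by simp [qint]

lemma qint_key (m : ℤ) : qint (m + 2) + qint m = (q + q⁻¹) * qint (m + 1) := by
  have hq := q_ne_zero
  have h2 := q_sub_inv_ne_zero
  simp only [qint, neg_add]
  rw [← add_div, ← mul_div_assoc, div_eq_div_iff h2 h2]
  have e1 : q ^ (m + 2) = q ^ m * q * q := by
    rw [show m + 2 = m + 1 + 1 by ring, zpow_add_one₀ hq, zpow_add_one₀ hq]
  have e2 : q ^ (-m + -2) = q ^ (-m) * q⁻¹ * q⁻¹ := by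
    rw [show -m + -2 = (-m + -1) - 1 by ring, zpow_sub_one₀ hq,
      show -m + -1 = -m - 1 by ring, zpow_sub_one₀ hq]
  have e3 : q ^ (m + 1) = q ^ m * q := by rw [zpow_add_one₀ hq]
  have e4 : q ^ (-m + -1) = q ^ (-m) * q⁻¹ := by
    rw [show -m + -1 = -m - 1 by ring, zpow_sub_one₀ hq]
  rw [e1, e2, e3, e4]
  have hinv : q * q⁻¹ = 1 := mul_inv_cancel₀ hq
  linear_combination ((q - q⁻¹) * (q ^ (-m) - q ^ m)) * hinv

lemma monomial_eq (d : Fin 2 →₀ ℕ) (c : K) :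
    MvPolynomial.monomial d c = c • mono (d 0) (d 1) := by
  have hd : d = Finsupp.single 0 (d 0) + Finsupp.single 1 (d 1) := by
    ext i
    fin_cases i <;> simp [Finsupp.single_apply]
  rw [mono, MvPolynomial.smul_monomial, smul_eq_mul, mul_one, ← hd]

/-- the Serre-type relation e²t + te² = (q+q⁻¹)ete in the
oscillator representation of ⁱU(A_{2r+2,1}) with r = 0. -/
theorem stmt14 (e t : Module.End K (MvPolynomial (Fin 2) K))
    (he : ∀ a b : ℕ, e (mono a b) = qint (b : ℤ) • mono (a + 1) (b - 1))
    (ht : ∀ a b : ℕ, t (mono a b) = (-qint (b : ℤ)) • mono a b) :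
    e ^ 2 * t + t * e ^ 2 = (q + q⁻¹) • (e * t * e) := by
  apply LinearMap.ext; intro p
  induction p using MvPolynomial.induction_on' with
  | add p1 p2 h1 h2 => simp only [map_add, h1, h2]
  | monomial d c =>
    rw [monomial_eq, map_smul, map_smul]
    congr 1
    set a := d 0
    set b := d 1
    match b with
    | 0 =>
      simp [sq, Module.End.mul_apply, he, ht, qint_zero]
    | 1 =>
      simp [sq, Module.End.mul_apply, he, ht, qint_zero, map_smul, smul_smul]
    | (n+2) =>
      have hsub : ∀ m : ℕ, m + 2 - 1 = m + 1 := fun m => rfl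
      simp only [sq, Module.End.mul_apply, LinearMap.add_apply, LinearMap.smul_apply,
        he, ht, map_smul, map_neg, smul_smul, neg_smul, smul_neg, hsub, Nat.add_sub_cancel,
        Nat.cast_add, Nat.cast_ofNat, Nat.cast_one]
      rw [← neg_add, ← add_smul, ← neg_smul, ← neg_smul]
      congr 1
      linear_combination (-(qint ((n : ℤ) + 2)) * qint ((n : ℤ) + 1)) * qint_key n
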